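/- For the m-Dyck shift with m > 1 and any n, the sum ∑_{k≥1} (a_n · w_k)/(a_{n+k}) ≤ 1/m, where a_n is the number of admissible words of length n and w_k is the number of balanced words of length k. -/

import Mathlib

/-- Symbols of the `m`-Dyck alphabet: `a j` is the opening bracket `α_j`,
`b j` is the closing bracket `β_j`. -/
inductive DSym (m : ℕ) : Type
  | a : Fin m → DSym m
  | b : Fin m → DSym m
  deriving DecidableEq

namespace Dyck

/-- One step of the stack evaluation computing the reduced form (canonical
representative in the syntactic monoid).  `none` is the zero of the monoid;
`some (bs, as)` is the reduced word `β_{bs} α_{as}` (unmatched closing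
brackets, then a stack of unmatched opening brackets). -/
def step {m : ℕ} : Option (List (Fin m) × List (Fin m)) → DSym m →
    Option (List (Fin m) × List (Fin m))
  | none, _ => none
  | some (bs, as), .a j => some (bs, j :: as)
  | some (bs, []), .b j => some (bs ++ [j], [])
  | some (bs, i :: as), .b j => if i = j then some (bs, as) else none

/-- The image of a word in the syntactic monoid `M` (in reduced form). -/
def eval {m : ℕ} (w : List (DSym m)) : Option (List (Fin m) × List (Fin m)) :=
  w.foldl step (some ([], []))

/-- A word is admissible (belongs to the Dyck language) iff it is nonzero mod `M`. -/
def Admissible {m : ℕ} (w : List (DSym m)) : Prop := eval w ≠ none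

/-- A word is balanced iff it is `≡ 1` mod `M`. -/
def Balanced {m : ℕ} (w : List (DSym m)) : Prop := eval w = some ([], [])

end Dyck

namespace Dyck

/-- `aCount m n` is the number of admissible words of length `n` in the `m`-Dyck language. -/
noncomputable def aCount (m n : ℕ) : ℕ :=
  {w : List (DSym m) | w.length = n ∧ Admissible w}.ncard

/-- `wCount m k` is the number of balanced words of length `k` in the `m`-Dyck language. -/
noncomputable def wCount (m k : ℕ) : ℕ :=
  {w : List (DSym m) | w.length = k ∧ Balanced w}.ncard

end Dyck


namespace Dyck

variable {m : ℕ}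

instance : Finite (DSym m) := by
  have e : DSym m ≃ (Fin m ⊕ Fin m) :=
    { toFun := fun s => match s with | .a j => .inl j | .b j => .inr j
      invFun := fun s => match s with | .inl j => .a j | .inr j => .b j
      left_inv := fun s => by cases s <;> rfl
      right_inv := fun s => by cases s <;> rfl }
  exact Finite.of_equiv _ e.symm

lemma finite_words (n : ℕ) (P : List (DSym m) → Prop) :
    {w : List (DSym m) | w.length = n ∧ P w}.Finite :=
  (List.finite_length_eq (DSym m) n).subset (fun w hw => hw.1)

def isA : DSym m → Bool := fun s => match s with | .a _ => true | .b _ => false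

lemma foldl_none (w : List (DSym m)) : w.foldl step none = none := by
  induction w with
  | nil => rfl
  | cons x w ih => simpa [step] using ih

lemma master (w : List (DSym m)) : ∀ bs as bs' as' : List (Fin m),
    w.foldl step (some (bs, as)) = some (bs', as') →
    (w.countP isA + as.length + bs'.length
      = w.countP (fun s => !isA s) + as'.length + bs.length ∧
     bs.length ≤ bs'.length) := by
  induction w with
  | nil =>
    intro bs as bs' as' h
    simp only [List.foldl_nil, Option.some.injEq, Prod.mk.injEq] at h
    obtain ⟨h1, h2⟩ := h
    subst h1; subst h2
    simp
  | cons x w ih =>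
    intro bs as bs' as' h
    cases x with
    | a j =>
      rw [List.foldl_cons] at h
      have hstep : step (some (bs, as)) (DSym.a j) = some (bs, j :: as) := by simp [step]
      rw [hstep] at h
      obtain ⟨h1, h2⟩ := ih bs (j :: as) bs' as' h
      constructor
      · simp only [List.countP_cons, isA] at h1 ⊢
        simp at h1 ⊢
        omega
      · exact h2
    | b j =>
      rw [List.foldl_cons] at h
      cases as with
      | nil =>
        have hstep : step (some (bs, ([] : List (Fin m)))) (DSym.b j)
            = some (bs ++ [j], []) := by simp [step]
        rw [hstep] at h
        obtain ⟨h1, h2⟩ := ih (bs ++ [j]) [] bs' as' h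
        simp only [List.length_append, List.length_singleton] at h1 h2
        constructor
        · simp only [List.countP_cons, isA] at h1 ⊢
          simp at h1 ⊢
          omega
        · omega
      | cons i as =>
        rcases eq_or_ne i j with rfl | hne
        · have hstep : step (some (bs, i :: as)) (DSym.b i) = some (bs, as) := by
            simp [step]
          rw [hstep] at h
          obtain ⟨h1, h2⟩ := ih bs as bs' as' h
          constructor
          · simp only [List.countP_cons, isA] at h1 ⊢
            simp at h1 ⊢
            omega
          · exact h2
        · have hstep : step (some (bs, i :: as)) (DSym.b j) = none := by
            simp [step, hne]
          rw [hstep, foldl_none] at h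
          exact absurd h (by simp)

lemma eval_append_single (w : List (DSym m)) (s : DSym m) :
    eval (w ++ [s]) = step (eval w) s := by
  simp [eval, List.foldl_append]

/-- the symbol to append -/
def ext (hm : 0 < m) : Option (Fin m) → List (DSym m) → DSym m
  | some j, _ => .a j
  | none, w => .b (match eval w with
      | some (_, i :: _) => i
      | _ => ⟨0, hm⟩)

lemma ext_admissible (hm : 0 < m) (o : Option (Fin m)) (w : List (DSym m))
    (hw : Admissible w) : Admissible (w ++ [ext hm o w]) := by
  unfold Admissible at hw ⊢
  rw [eval_append_single]
  obtain ⟨⟨bs, as⟩, hp⟩ := Option.ne_none_iff_exists'.mp hw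
  cases o with
  | some j => rw [hp]; simp [ext, step]
  | none =>
    cases as with
    | nil => rw [hp]; simp [ext, step]
    | cons i as =>
      have : ext hm none w = .b i := by simp [ext, hp]
      rw [this, hp]
      simp [step]

lemma aCount_step (hm : 0 < m) (n : ℕ) :
    (m + 1) * aCount m n ≤ aCount m (n + 1) := by
  classical
  set A : ℕ → Set (List (DSym m)) :=
    fun k => {w : List (DSym m) | w.length = k ∧ Admissible w} with hA
  haveI h1 : Finite (A n) := (finite_words n _).to_subtype
  haveI h2 : Finite (A (n + 1)) := (finite_words (n + 1) _).to_subtype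
  set F : Option (Fin m) × A n → A (n + 1) := fun p =>
    ⟨p.2.1 ++ [ext hm p.1 p.2.1], by
      refine ⟨?_, ext_admissible hm p.1 p.2.1 p.2.2.2⟩
      simp [p.2.2.1]⟩ with hF
  have hinj : Function.Injective F := by
    rintro ⟨o₁, ⟨w₁, hw₁⟩⟩ ⟨o₂, ⟨w₂, hw₂⟩⟩ h
    simp only [hF, Subtype.mk.injEq] at h
    have hlen : w₁.length = w₂.length := by rw [hw₁.1, hw₂.1]
    obtain ⟨hww, hs⟩ := List.append_inj h hlen
    subst hww
    have hs' : ext hm o₁ w₁ = ext hm o₂ w₁ := by simpa using hs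
    have : o₁ = o₂ := by
      cases o₁ with
      | some j₁ =>
        cases o₂ with
        | some j₂ => simpa [ext] using hs'
        | none => simp [ext] at hs'
      | none =>
        cases o₂ with
        | some j₂ => simp [ext] at hs'
        | none => rfl
    simp [this]
  have hcard := Nat.card_le_card_of_injective F hinj
  rw [Nat.card_prod] at hcard
  have hopt : Nat.card (Option (Fin m)) = m + 1 := by
    simp [Nat.card_eq_fintype_card]
  rw [hopt, Nat.card_coe_set_eq, Nat.card_coe_set_eq] at hcard
  exact hcard

lemma aCount_pos (hm : 0 < m) (n : ℕ) : 0 < aCount m n := by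
  rw [aCount, Set.ncard_pos (finite_words n _)]
  refine ⟨List.replicate n (DSym.a ⟨0, hm⟩), by simp, ?_⟩
  unfold Admissible eval
  have : ∀ (k : ℕ) (bs as : List (Fin m)),
      (List.replicate k (DSym.a ⟨0, hm⟩)).foldl step (some (bs, as)) ≠ none := by
    intro k
    induction k with
    | zero => intro bs as; simp
    | succ k ih =>
      intro bs as
      rw [List.replicate_succ, List.foldl_cons]
      have : step (some (bs, as)) (DSym.a ⟨0, hm⟩) = some (bs, ⟨0, hm⟩ :: as) := by
        simp [step]
      rw [this]
      exact ih bs _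
  exact this n [] []

lemma aCount_growth (hm : 0 < m) (n k : ℕ) :
    (m + 1) ^ k * aCount m n ≤ aCount m (n + k) := by
  induction k with
  | zero => simp
  | succ k ih =>
    have : (m + 1) ^ (k + 1) * aCount m n = (m + 1) * ((m + 1) ^ k * aCount m n) := by
      ring
    rw [this, ← Nat.add_assoc]
    calc (m + 1) * ((m + 1) ^ k * aCount m n) ≤ (m + 1) * aCount m (n + k) :=
          Nat.mul_le_mul_left _ ih
      _ ≤ aCount m (n + k + 1) := aCount_step hm (n + k)


open DyckStep in
def toStep : DSym m → DyckStep := fun s => match s with | .a _ => U | .b _ => D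

def shape (w : List (DSym m)) : List DyckStep := w.map toStep

def labels (w : List (DSym m)) : List (Fin m) :=
  w.filterMap fun s => match s with | .a j => some j | .b _ => none

open DyckStep

lemma count_shape_U (w : List (DSym m)) : (shape w).count U = w.countP isA := by
  rw [shape, List.count, List.countP_map]
  refine List.countP_congr fun x _ => ?_
  cases x <;> rfl

lemma count_shape_D (w : List (DSym m)) :
    (shape w).count D = w.countP (fun s => !isA s) := by
  rw [shape, List.count, List.countP_map]
  refine List.countP_congr fun x _ => ?_
  cases x <;> rfl

lemma balanced_prefix_eval (w : List (DSym m)) (hw : Balanced w) (i : ℕ) :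
    ∃ as : List (Fin m), eval (w.take i) = some ([], as) := by
  have hsplit : eval w = (w.drop i).foldl step (eval (w.take i)) := by
    conv_lhs => rw [eval, ← List.take_append_drop i w]
    rw [List.foldl_append]
    rfl
  cases he : eval (w.take i) with
  | none => rw [Balanced, hsplit, he, foldl_none] at hw; exact absurd hw (by simp)
  | some p =>
    obtain ⟨bs, as⟩ := p
    rw [Balanced, hsplit, he] at hw
    have := (master (w.drop i) bs as [] [] hw).2
    simp only [List.length_nil, Nat.le_zero, List.length_eq_zero_iff] at this
    subst this
    exact ⟨as, rfl⟩

lemma balanced_counts (w : List (DSym m)) (hw : Balanced w) :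
    w.countP isA = w.countP (fun s => !isA s) := by
  have := (master w [] [] [] [] hw).1
  simpa using this

lemma balanced_prefix_counts (w : List (DSym m)) (hw : Balanced w) (i : ℕ) :
    (w.take i).countP (fun s => !isA s) ≤ (w.take i).countP isA := by
  obtain ⟨as, he⟩ := balanced_prefix_eval w hw i
  have := (master (w.take i) [] [] [] as he).1
  simp only [List.length_nil] at this
  omega

/-- the Dyck word underlying a balanced word -/
def toDyck (w : List (DSym m)) (hw : Balanced w) : DyckWord where
  toList := shape w
  count_U_eq_count_D := by
    rw [count_shape_U, count_shape_D]; exact balanced_counts w hw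
  count_D_le_count_U := by
    intro i
    have h1 : (shape w).take i = shape (w.take i) := List.map_take.symm
    rw [h1, count_shape_U, count_shape_D]
    exact balanced_prefix_counts w hw i

lemma labels_length (w : List (DSym m)) : (labels w).length = w.countP isA := by
  induction w with
  | nil => rfl
  | cons x w ih =>
    cases x <;> simp [labels, isA, List.countP_cons] at ih ⊢ <;> omega

/-- reconstruction of a word from its shape and labels -/
def recon : List DyckStep → List (Fin m) → List (Fin m) → Option (List (DSym m))
  | [], _, _ => some []
  | (U :: s), (l :: ls), st => (recon s ls (l :: st)).map (fun w => DSym.a l :: w)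
  | (U :: _), [], _ => none
  | (D :: s), ls, (t :: st) => (recon s ls st).map (fun w => DSym.b t :: w)
  | (D :: _), _, [] => none

lemma recon_eq (w : List (DSym m)) : ∀ st : List (Fin m),
    w.foldl step (some ([], st)) = some ([], []) →
    recon (shape w) (labels w) st = some w := by
  induction w with
  | nil => intro st h; rfl
  | cons x w ih =>
    intro st h
    cases x with
    | a j =>
      rw [List.foldl_cons] at h
      have hs : step (some (([] : List (Fin m)), st)) (DSym.a j) = some ([], j :: st) := by
        simp [step]
      rw [hs] at h
      have := ih (j :: st) h
      have hsh : shape (DSym.a j :: w) = U :: shape w := rfl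
      have hlb : labels (DSym.a j :: w) = j :: labels w := rfl
      rw [hsh, hlb]
      have hred : recon (U :: shape w) (j :: labels w) st
          = (recon (shape w) (labels w) (j :: st)).map (fun v => DSym.a j :: v) := rfl
      rw [hred, this]
      rfl
    | b j =>
      rw [List.foldl_cons] at h
      cases st with
      | nil =>
        have hs : step (some (([] : List (Fin m)), ([] : List (Fin m)))) (DSym.b j)
            = some ([j], []) := by simp [step]
        rw [hs] at h
        have := (master w [j] [] [] [] h).2
        simp at this
      | cons i st =>
        rcases eq_or_ne i j with rfl | hne
        · have hs : step (some (([] : List (Fin m)), i :: st)) (DSym.b i)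
              = some ([], st) := by simp [step]
          rw [hs] at h
          have := ih st h
          have hsh : shape (DSym.b i :: w) = D :: shape w := rfl
          have hlb : labels (DSym.b i :: w) = labels w := rfl
          rw [hsh, hlb]
          have hred : recon (D :: shape w) (labels w) (i :: st)
              = (recon (shape w) (labels w) st).map (fun v => DSym.b i :: v) := rfl
          rw [hred, this]
          rfl
        · have hs : step (some (([] : List (Fin m)), i :: st)) (DSym.b j) = none := by
            simp [step, hne]
          rw [hs, foldl_none] at h
          exact absurd h (by simp)

lemma balanced_ext {w₁ w₂ : List (DSym m)} (h₁ : Balanced w₁) (h₂ : Balanced w₂)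
    (hs : shape w₁ = shape w₂) (hl : labels w₁ = labels w₂) : w₁ = w₂ := by
  have r₁ := recon_eq w₁ [] h₁
  have r₂ := recon_eq w₂ [] h₂
  rw [hs, hl] at r₁
  rw [r₁] at r₂
  exact Option.some.injEq _ _ ▸ r₂.symm ▸ rfl

lemma wCount_le (j : ℕ) : wCount m (2 * j) ≤ catalan j * m ^ j := by
  classical
  set B : Set (List (DSym m)) := {w | w.length = 2 * j ∧ Balanced w} with hB
  haveI : Finite B := (finite_words (2 * j) _).to_subtype
  haveI : Finite { l : List (Fin m) // l.length = j } :=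
    Finite.of_equiv (List.Vector (Fin m) j) (Equiv.refl _)
  have hhalf : ∀ w : List (DSym m), w ∈ B → w.countP isA = j := by
    rintro w ⟨hlen, hbal⟩
    have h1 := balanced_counts w hbal
    have h2 := List.length_eq_countP_add_countP (p := isA) (l := w)
    have h3 : w.countP (fun a => decide ¬ isA a = true) = w.countP (fun s => !isA s) := by
      refine List.countP_congr fun x _ => by cases x <;> rfl
    omega
  set F : B → { p : DyckWord // p.semilength = j } × { l : List (Fin m) // l.length = j } :=
    fun w => (⟨toDyck w.1 w.2.2, by
        rw [DyckWord.semilength]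
        show (shape w.1).count U = j
        rw [count_shape_U]
        exact hhalf w.1 w.2⟩,
      ⟨labels w.1, by rw [labels_length]; exact hhalf w.1 w.2⟩) with hF
  have hinj : Function.Injective F := by
    rintro ⟨w₁, hw₁⟩ ⟨w₂, hw₂⟩ h
    simp only [hF, Prod.mk.injEq, Subtype.mk.injEq] at h
    have hs : shape w₁ = shape w₂ := congrArg DyckWord.toList h.1
    exact Subtype.ext (balanced_ext hw₁.2 hw₂.2 hs h.2)
  have hcard := Nat.card_le_card_of_injective F hinj
  rw [Nat.card_prod, Nat.card_coe_set_eq] at hcard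
  have hd : Nat.card { p : DyckWord // p.semilength = j } = catalan j := by
    rw [Nat.card_eq_fintype_card, DyckWord.card_dyckWord_semilength_eq_catalan]
  have hv : Nat.card { l : List (Fin m) // l.length = j } = m ^ j := by
    have e : List.Vector (Fin m) j ≃ { l : List (Fin m) // l.length = j } := Equiv.refl _
    rw [← Nat.card_congr e, Nat.card_eq_fintype_card, card_vector, Fintype.card_fin]
  rw [hd, hv] at hcard
  exact hcard

lemma wCount_odd (k : ℕ) (hk : k % 2 = 1) : wCount m k = 0 := by
  rw [wCount, Set.ncard_eq_zero (finite_words k _)]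
  ext w
  simp only [Set.mem_setOf_eq, Set.mem_empty_iff_false, iff_false, not_and]
  intro hlen hbal
  have h1 := balanced_counts w hbal
  have h2 := List.length_eq_countP_add_countP (p := isA) (l := w)
  have h3 : w.countP (fun a => decide ¬ isA a = true) = w.countP (fun s => !isA s) := by
    refine List.countP_congr fun x _ => by cases x <;> rfl
  omega


open Finset in
lemma conv_le (f : ℕ → ℝ) (hf : ∀ i, 0 ≤ f i) (N : ℕ) :
    ∑ j ∈ range N, ∑ i ∈ range (j + 1), f i * f (j - i)
      ≤ (∑ i ∈ range N, f i) ^ 2 := by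
  classical
  have hR : (∑ i ∈ range N, f i) ^ 2
      = ∑ q ∈ range N ×ˢ range N, f q.1 * f q.2 := by
    rw [sq, Finset.sum_mul_sum, ← Finset.sum_product']
  have hL : ∑ j ∈ range N, ∑ i ∈ range (j + 1), f i * f (j - i)
      = ∑ p ∈ (range N).sigma (fun j => range (j + 1)), f p.2 * f (p.1 - p.2) := by
    rw [Finset.sum_sigma]
  set s := (range N).sigma (fun j => range (j + 1)) with hs
  set e : (Σ _ : ℕ, ℕ) → ℕ × ℕ := fun p => (p.2, p.1 - p.2) with he
  have hinj : ∀ x ∈ s, ∀ y ∈ s, e x = e y → x = y := by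
    rintro ⟨j₁, i₁⟩ hx ⟨j₂, i₂⟩ hy hxy
    simp only [hs, Finset.mem_sigma, Finset.mem_range] at hx hy
    simp only [he, Prod.mk.injEq] at hxy
    obtain ⟨h1, h2⟩ := hxy
    have hj : j₁ = j₂ := by omega
    subst hj; subst h1; rfl
  have himg : ∑ q ∈ s.image e, f q.1 * f q.2 = ∑ p ∈ s, f p.2 * f (p.1 - p.2) :=
    Finset.sum_image hinj
  have hsub : s.image e ⊆ range N ×ˢ range N := by
    intro q hq
    simp only [Finset.mem_image] at hq
    obtain ⟨⟨j, i⟩, hp, rfl⟩ := hq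
    simp only [hs, Finset.mem_sigma, Finset.mem_range] at hp
    simp only [he, Finset.mem_product, Finset.mem_range]
    omega
  rw [hL, hR, ← himg]
  exact Finset.sum_le_sum_of_subset_of_nonneg hsub fun q _ _ => mul_nonneg (hf _) (hf _)

lemma cat_succ_eq {x : ℝ} (j : ℕ) :
    (catalan (j + 1) : ℝ) * x ^ (j + 1)
      = x * ∑ i ∈ Finset.range (j + 1),
          ((catalan i : ℝ) * x ^ i) * ((catalan (j - i) : ℝ) * x ^ (j - i)) := by
  have hc : catalan (j + 1) = ∑ i ∈ Finset.range (j + 1), catalan i * catalan (j - i) := by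
    rw [catalan_succ']
    rw [← Finset.Nat.sum_antidiagonal_eq_sum_range_succ (fun a b => catalan a * catalan b)]
  rw [hc, Finset.mul_sum]
  push_cast
  rw [Finset.sum_mul]
  refine Finset.sum_congr rfl fun i hi => ?_
  rw [Finset.mem_range] at hi
  have h2 : i + (j - i) = j := by omega
  have h3 : x ^ i * x ^ (j - i) = x ^ j := by rw [← pow_add, h2]
  calc (catalan i : ℝ) * (catalan (j - i) : ℝ) * x ^ (j + 1)
      = (catalan i : ℝ) * (catalan (j - i) : ℝ) * (x ^ j * x) := by rw [pow_succ]
    _ = x * ((catalan i : ℝ) * x ^ i * ((catalan (j - i) : ℝ) * x ^ (j - i))) := by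
        rw [← h3]; ring

lemma catalan_sum_le (m : ℕ) (hm : 1 < m) (N : ℕ) :
    ∑ j ∈ Finset.range N, (catalan j : ℝ) * ((m : ℝ) / ((m : ℝ) + 1) ^ 2) ^ j
      ≤ ((m : ℝ) + 1) / (m : ℝ) := by
  have hm0 : (0 : ℝ) < m := by exact_mod_cast Nat.zero_lt_of_lt hm
  set x : ℝ := (m : ℝ) / ((m : ℝ) + 1) ^ 2 with hxdef
  have hx0 : 0 ≤ x := by positivity
  set f : ℕ → ℝ := fun j => (catalan j : ℝ) * x ^ j with hfdef
  have hf0 : ∀ i, 0 ≤ f i := fun i => by positivity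
  induction N with
  | zero => simp; positivity
  | succ N ih =>
    rw [Finset.sum_range_succ']
    have h0 : f 0 = 1 := by simp [hfdef]
    have hstep : ∑ i ∈ Finset.range N, f (i + 1)
        ≤ x * (∑ i ∈ Finset.range N, f i) ^ 2 := by
      calc ∑ i ∈ Finset.range N, f (i + 1)
          = x * ∑ j ∈ Finset.range N, ∑ i ∈ Finset.range (j + 1), f i * f (j - i) := by
            rw [Finset.mul_sum]
            exact Finset.sum_congr rfl fun j _ => cat_succ_eq j
        _ ≤ x * (∑ i ∈ Finset.range N, f i) ^ 2 :=
            mul_le_mul_of_nonneg_left (conv_le f hf0 N) hx0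
    have hS0 : 0 ≤ ∑ i ∈ Finset.range N, f i := Finset.sum_nonneg fun i _ => hf0 i
    have hsq : (∑ i ∈ Finset.range N, f i) ^ 2 ≤ (((m : ℝ) + 1) / (m : ℝ)) ^ 2 :=
      pow_le_pow_left₀ hS0 ih 2
    have hfin : x * (((m : ℝ) + 1) / (m : ℝ)) ^ 2 + 1 = ((m : ℝ) + 1) / (m : ℝ) := by
      rw [hxdef]
      field_simp
      ring
    have h5 := mul_le_mul_of_nonneg_left hsq hx0
    have key : ∑ i ∈ Finset.range N, f (i + 1) + f 0 ≤ ((m : ℝ) + 1) / (m : ℝ) := by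
      rw [h0]; linarith
    exact key


lemma half_sum (c : ℕ → ℝ) (N : ℕ) :
    ∑ k ∈ Finset.range (2 * N), (if k % 2 = 1 then c ((k + 1) / 2) else 0)
      = ∑ j ∈ Finset.range N, c (j + 1) := by
  induction N with
  | zero => rfl
  | succ N ih =>
    rw [show 2 * (N + 1) = 2 * N + 1 + 1 by ring, Finset.sum_range_succ, Finset.sum_range_succ,
      ih, Finset.sum_range_succ]
    have h1 : ¬ ((2 * N) % 2 = 1) := by omega
    have h2 : (2 * N + 1) % 2 = 1 := by omega
    have h3 : (2 * N + 1 + 1) / 2 = N + 1 := by omega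
    simp [h1, h2, h3]


end Dyck

/-- for `m > 1` and any `n`,
`∑_{k≥1} a_n · w_k / a_{n+k} ≤ 1/m`. -/
theorem stmt6 (m : ℕ) (hm : 1 < m) (n : ℕ) :
    (∑' k : ℕ, ((Dyck.aCount m n : ℝ) * (Dyck.wCount m (k + 1) : ℝ)) /
        (Dyck.aCount m (n + (k + 1)) : ℝ)) ≤ 1 / (m : ℝ) := by
  have hm0 : 0 < m := by omega
  have hmR : (0 : ℝ) < m := by exact_mod_cast hm0
  set x : ℝ := (m : ℝ) / ((m : ℝ) + 1) ^ 2 with hxdef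
  set c : ℕ → ℝ := fun j => (catalan j : ℝ) * x ^ j with hc
  have hx0 : 0 ≤ x := by positivity
  have hc0 : ∀ j, 0 ≤ c j := fun j => by rw [hc]; positivity
  set h : ℕ → ℝ := fun k => if k % 2 = 1 then c ((k + 1) / 2) else 0 with hh
  have hh0 : ∀ k, 0 ≤ h k := by
    intro k
    rw [hh]
    by_cases hk : k % 2 = 1
    · simpa [hk] using hc0 ((k + 1) / 2)
    · simp [hk]
  have hterm : ∀ k : ℕ,
      (Dyck.aCount m n : ℝ) * (Dyck.wCount m (k + 1) : ℝ) /
        (Dyck.aCount m (n + (k + 1)) : ℝ) ≤ h k := by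
    intro k
    rcases Nat.even_or_odd k with he | ho
    · have hodd : (k + 1) % 2 = 1 := by
        obtain ⟨t, ht⟩ := he; omega
      rw [Dyck.wCount_odd (k + 1) hodd]
      simpa using hh0 k
    · obtain ⟨j, hj⟩ := ho
      have hk1 : k + 1 = 2 * (j + 1) := by omega
      have hmod : k % 2 = 1 := by omega
      have hw : (Dyck.wCount m (k + 1) : ℝ) ≤ (catalan (j + 1) : ℝ) * (m : ℝ) ^ (j + 1) := by
        rw [hk1]
        exact_mod_cast Dyck.wCount_le (j + 1)
      have haR : ((m : ℝ) + 1) ^ (k + 1) * (Dyck.aCount m n : ℝ)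
          ≤ (Dyck.aCount m (n + (k + 1)) : ℝ) := by
        have := Dyck.aCount_growth hm0 n (k + 1)
        push_cast at this ⊢
        exact_mod_cast this
      have hapos : (0 : ℝ) < (Dyck.aCount m n : ℝ) := by exact_mod_cast Dyck.aCount_pos hm0 n
      have hwpos : (0 : ℝ) ≤ (Dyck.wCount m (k + 1) : ℝ) := Nat.cast_nonneg _
      have hdenpos : (0 : ℝ) < ((m : ℝ) + 1) ^ (k + 1) * (Dyck.aCount m n : ℝ) := by positivity
      have step1 : (Dyck.aCount m n : ℝ) * (Dyck.wCount m (k + 1) : ℝ) /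
            (Dyck.aCount m (n + (k + 1)) : ℝ)
          ≤ (Dyck.aCount m n : ℝ) * (Dyck.wCount m (k + 1) : ℝ) /
            (((m : ℝ) + 1) ^ (k + 1) * (Dyck.aCount m n : ℝ)) := by
        gcongr
      have step2 : (Dyck.aCount m n : ℝ) * (Dyck.wCount m (k + 1) : ℝ) /
            (((m : ℝ) + 1) ^ (k + 1) * (Dyck.aCount m n : ℝ))
          = (Dyck.wCount m (k + 1) : ℝ) / ((m : ℝ) + 1) ^ (k + 1) := by
        field_simp
      have step3 : (Dyck.wCount m (k + 1) : ℝ) / ((m : ℝ) + 1) ^ (k + 1)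
          ≤ ((catalan (j + 1) : ℝ) * (m : ℝ) ^ (j + 1)) / ((m : ℝ) + 1) ^ (k + 1) := by
        gcongr
      have hck : h k = (catalan (j + 1) : ℝ) * (m : ℝ) ^ (j + 1) / ((m : ℝ) + 1) ^ (k + 1) := by
        rw [hh]
        simp only [if_pos hmod]
        have hdiv : (k + 1) / 2 = j + 1 := by omega
        rw [hdiv, hc]
        simp only
        rw [hxdef, div_pow, ← pow_mul, show 2 * (j + 1) = k + 1 from hk1.symm, mul_div_assoc]
      rw [hck]
      calc _ ≤ _ := step1
        _ = _ := step2
        _ ≤ _ := step3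
  refine tsum_le_of_sum_le' (by positivity) ?_
  intro u
  obtain ⟨N, hN⟩ := u.exists_nat_subset_range
  calc ∑ k ∈ u, (Dyck.aCount m n : ℝ) * (Dyck.wCount m (k + 1) : ℝ) /
          (Dyck.aCount m (n + (k + 1)) : ℝ)
      ≤ ∑ k ∈ u, h k := Finset.sum_le_sum fun k _ => hterm k
    _ ≤ ∑ k ∈ Finset.range (2 * N), h k := by
        apply Finset.sum_le_sum_of_subset_of_nonneg
        · exact hN.trans (Finset.range_subset_range.mpr (by omega))
        · intro k _ _; exact hh0 k
    _ = ∑ j ∈ Finset.range N, c (j + 1) := Dyck.half_sum c N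
    _ = ∑ j ∈ Finset.range (N + 1), c j - 1 := by
        rw [Finset.sum_range_succ']
        have hc0' : c 0 = 1 := by simp [hc]
        rw [hc0']; ring
    _ ≤ ((m : ℝ) + 1) / (m : ℝ) - 1 := by
        have hsum := Dyck.catalan_sum_le m hm (N + 1)
        have heq : ∑ j ∈ Finset.range (N + 1), c j
            = ∑ j ∈ Finset.range (N + 1), (catalan j : ℝ) * ((m : ℝ) / ((m : ℝ) + 1) ^ 2) ^ j := by
          simp only [hc, hxdef]
        linarith [heq ▸ hsum]
    _ = 1 / (m : ℝ) := by field_simp; ring
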